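/- Let κ : ℝ² → ℝ and u : ℝ² → ℝ both be continuously differentiable on an open neighborhood of X. Then ∫_X [ x₁·∂₁u(x) + (x₂+κ(x))·∂₂u(x) − (u(x) − u(x̲)) ]·f(x) dx = u(x̲) − ∫_{a₁}^{b₁} u(s,a₂)·(a₂+κ(s,a₂))·f(s,a₂) ds + ∫_{a₁}^{b₁} u(s,b₂)·(b₂+κ(s,b₂))·f(s,b₂) ds + ∫_{a₂}^{b₂} u(b₁,s)·b₁·f(b₁,s) ds − ∫_{a₂}^{b₂} u(a₁,s)·a₁·f(a₁,s) ds − ∫_X u(x)·[ x₁·∂₁f(x) + (x₂+κ(x))·∂₂f(x) + (3 + ∂₂κ(x))·f(x) ] dx. -/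

import Mathlib

open MeasureTheory Set

noncomputable section

/-- The type rectangle `X = [a₁,b₁] × [a₂,b₂] ⊆ ℝ²`. -/
def rect (a₁ b₁ a₂ b₂ : ℝ) : Set (ℝ × ℝ) := Icc a₁ b₁ ×ˢ Icc a₂ b₂

/-- First partial derivative `∂₁f(x)`. -/
def d1 (f : ℝ × ℝ → ℝ) (x : ℝ × ℝ) : ℝ := deriv (fun s => f (s, x.2)) x.1

/-- Second partial derivative `∂₂f(x)`. -/
def d2 (f : ℝ × ℝ → ℝ) (x : ℝ × ℝ) : ℝ := deriv (fun s => f (x.1, s)) x.2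

/-- The interior density of the transformed measure `μ`:
`x₁·∂₁f(x) + (x₂+k)·∂₂f(x) + 3·f(x)`. -/
def dens (k : ℝ) (f : ℝ × ℝ → ℝ) (x : ℝ × ℝ) : ℝ :=
  x.1 * d1 f x + (x.2 + k) * d2 f x + 3 * f x

/-- The integral `∫ g dμ` of a function `g` against the transformed measure `μ` on
`X = [a₁,b₁] × [a₂,b₂]` with constant third-party payment `k`: a unit atom at the
lower-left corner `x̲ = (a₁,a₂)`, signed line densities on the four edges of `X`, and
(negated) interior density `dens k f` against two-dimensional Lebesgue measure. -/
def muInt (a₁ b₁ a₂ b₂ k : ℝ) (f g : ℝ × ℝ → ℝ) : ℝ :=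
  g (a₁, a₂)
    - (a₂ + k) * ∫ s in a₁..b₁, g (s, a₂) * f (s, a₂)
    + (b₂ + k) * ∫ s in a₁..b₁, g (s, b₂) * f (s, b₂)
    + b₁ * ∫ s in a₂..b₂, g (b₁, s) * f (b₁, s)
    - a₁ * ∫ s in a₂..b₂, g (a₁, s) * f (a₁, s)
    - ∫ x in rect a₁ b₁ a₂ b₂, g x * dens k f x

/-- `μ(A)` for a set `A ⊆ X`, obtained by integrating the indicator of `A` against `μ`. -/
def muSet (a₁ b₁ a₂ b₂ k : ℝ) (f : ℝ × ℝ → ℝ) (A : Set (ℝ × ℝ)) : ℝ :=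
  muInt a₁ b₁ a₂ b₂ k f (A.indicator 1)

/-- `u` is nondecreasing in the first coordinate on `X`. -/
def IncAlong1 (X : Set (ℝ × ℝ)) (u : ℝ × ℝ → ℝ) : Prop :=
  ∀ s s' t : ℝ, (s, t) ∈ X → (s', t) ∈ X → s ≤ s' → u (s, t) ≤ u (s', t)

/-- `u` is nondecreasing in the second coordinate on `X`. -/
def IncAlong2 (X : Set (ℝ × ℝ)) (u : ℝ × ℝ → ℝ) : Prop :=
  ∀ s t t' : ℝ, (s, t) ∈ X → (s, t') ∈ X → t ≤ t' → u (s, t) ≤ u (s, t')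

/-- `u` is nonincreasing in the first coordinate on `X`. -/
def DecAlong1 (X : Set (ℝ × ℝ)) (u : ℝ × ℝ → ℝ) : Prop :=
  ∀ s s' t : ℝ, (s, t) ∈ X → (s', t) ∈ X → s ≤ s' → u (s', t) ≤ u (s, t)

/-- `u` is nonincreasing in the second coordinate on `X`. -/
def DecAlong2 (X : Set (ℝ × ℝ)) (u : ℝ × ℝ → ℝ) : Prop :=
  ∀ s t t' : ℝ, (s, t) ∈ X → (s, t') ∈ X → t ≤ t' → u (s, t') ≤ u (s, t)

/-- The feasible class `𝒰`: continuous, convex, nondecreasing in each coordinate,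
and 1-Lipschitz with respect to the `ℓ¹` norm, on `X`. -/
def FeasibleU (X : Set (ℝ × ℝ)) (u : ℝ × ℝ → ℝ) : Prop :=
  ContinuousOn u X ∧ ConvexOn ℝ X u ∧ IncAlong1 X u ∧ IncAlong2 X u ∧
    ∀ x ∈ X, ∀ y ∈ X, |u x - u y| ≤ |x.1 - y.1| + |x.2 - y.2|

end

lemma d1_eq_fderiv (g : ℝ×ℝ→ℝ) (x : ℝ×ℝ) (hg : DifferentiableAt ℝ g x) :
    d1 g x = fderiv ℝ g x (1,0) := by
  have h1 : HasDerivAt (fun s : ℝ => ((s, x.2) : ℝ×ℝ)) (1,0) x.1 :=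
    HasDerivAt.prodMk (hasDerivAt_id x.1) (hasDerivAt_const x.1 x.2)
  have h3 : HasFDerivAt g (fderiv ℝ g x) (x.1, x.2) := by
    rw [Prod.mk.eta]; exact hg.hasFDerivAt
  have h2 : HasDerivAt (fun s => g (s, x.2)) (fderiv ℝ g x (1,0)) x.1 := by
    exact h3.comp_hasDerivAt x.1 h1
  exact h2.deriv

lemma d2_eq_fderiv (g : ℝ×ℝ→ℝ) (x : ℝ×ℝ) (hg : DifferentiableAt ℝ g x) :
    d2 g x = fderiv ℝ g x (0,1) := by
  have h1 : HasDerivAt (fun s : ℝ => ((x.1, s) : ℝ×ℝ)) (0,1) x.2 :=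
    HasDerivAt.prodMk (hasDerivAt_const x.2 x.1) (hasDerivAt_id x.2)
  have h3 : HasFDerivAt g (fderiv ℝ g x) (x.1, x.2) := by
    rw [Prod.mk.eta]; exact hg.hasFDerivAt
  have h2 : HasDerivAt (fun s => g (x.1, s)) (fderiv ℝ g x (0,1)) x.2 := by
    exact h3.comp_hasDerivAt x.2 h1
  exact h2.deriv

lemma contOn_d1 (g : ℝ×ℝ→ℝ) (U : Set (ℝ×ℝ)) (hU : IsOpen U) (hg : ContDiffOn ℝ 1 g U) :
    ContinuousOn (d1 g) U := by
  have h := (hg.continuousOn_fderiv_of_isOpen hU le_rfl).clm_apply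
    (continuousOn_const (c := ((1:ℝ),(0:ℝ))))
  exact h.congr fun x hx =>
    d1_eq_fderiv g x ((hg.differentiableOn one_ne_zero).differentiableAt (hU.mem_nhds hx))

lemma contOn_d2 (g : ℝ×ℝ→ℝ) (U : Set (ℝ×ℝ)) (hU : IsOpen U) (hg : ContDiffOn ℝ 1 g U) :
    ContinuousOn (d2 g) U := by
  have h := (hg.continuousOn_fderiv_of_isOpen hU le_rfl).clm_apply
    (continuousOn_const (c := ((0:ℝ),(1:ℝ))))
  exact h.congr fun x hx =>
    d2_eq_fderiv g x ((hg.differentiableOn one_ne_zero).differentiableAt (hU.mem_nhds hx))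


/-- Integration-by-parts identity (Appendix A.1) for a general third-party payment
function `κ`. -/
theorem stmt0
    (a₁ b₁ a₂ b₂ : ℝ) (ha₁ : 0 ≤ a₁) (hab₁ : a₁ < b₁) (hab₂ : a₂ < b₂) (hb₂ : b₂ ≤ 0)
    (U : Set (ℝ × ℝ)) (hU : IsOpen U) (hXU : rect a₁ b₁ a₂ b₂ ⊆ U)
    (f : ℝ × ℝ → ℝ) (hf : ContDiffOn ℝ 1 f U)
    (hfbd : ∃ C, ∀ x ∈ U, |d1 f x| ≤ C ∧ |d2 f x| ≤ C)
    (hfpos : ∀ x ∈ rect a₁ b₁ a₂ b₂, 0 < f x)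
    (hfint : (∫ x in rect a₁ b₁ a₂ b₂, f x) = 1)
    (κ : ℝ × ℝ → ℝ) (hκ : ContDiffOn ℝ 1 κ U)
    (u : ℝ × ℝ → ℝ) (hu : ContDiffOn ℝ 1 u U) :
    (∫ x in rect a₁ b₁ a₂ b₂,
        (x.1 * d1 u x + (x.2 + κ x) * d2 u x - (u x - u (a₁, a₂))) * f x)
      = u (a₁, a₂)
        - (∫ s in a₁..b₁, u (s, a₂) * (a₂ + κ (s, a₂)) * f (s, a₂))
        + (∫ s in a₁..b₁, u (s, b₂) * (b₂ + κ (s, b₂)) * f (s, b₂))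
        + (∫ s in a₂..b₂, u (b₁, s) * b₁ * f (b₁, s))
        - (∫ s in a₂..b₂, u (a₁, s) * a₁ * f (a₁, s))
        - ∫ x in rect a₁ b₁ a₂ b₂,
            u x * (x.1 * d1 f x + (x.2 + κ x) * d2 f x + (3 + d2 κ x) * f x) := by
  have hXIcc : rect a₁ b₁ a₂ b₂ = Icc ((a₁,a₂) : ℝ×ℝ) (b₁,b₂) := by
    rw [rect, Icc_prod_Icc]
  set X : Set (ℝ×ℝ) := rect a₁ b₁ a₂ b₂ with hXdef
  have hUu : ∀ x ∈ U, DifferentiableAt ℝ u x := fun x hx =>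
    (hu.differentiableOn one_ne_zero).differentiableAt (hU.mem_nhds hx)
  have hUf : ∀ x ∈ U, DifferentiableAt ℝ f x := fun x hx =>
    (hf.differentiableOn one_ne_zero).differentiableAt (hU.mem_nhds hx)
  have hUκ : ∀ x ∈ U, DifferentiableAt ℝ κ x := fun x hx =>
    (hκ.differentiableOn one_ne_zero).differentiableAt (hU.mem_nhds hx)
  set P : ℝ×ℝ→ℝ := fun y => y.1 * (u y * f y) with hPdef
  set Q : ℝ×ℝ→ℝ := fun y => (y.2 + κ y) * (u y * f y) with hQdef
  set E : ℝ×ℝ→ℝ := fun x =>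
      u x * f x + x.1 * (d1 u x * f x + u x * d1 f x)
      + (1 + d2 κ x) * (u x * f x) + (x.2 + κ x) * (d2 u x * f x + u x * d2 f x) with hEdef
  -- pointwise computation of the divergence on U
  have key : ∀ x ∈ U, fderiv ℝ P x (1,0) + fderiv ℝ Q x (0,1) = E x := by
    intro x hx
    have hu' := (hUu x hx).hasFDerivAt
    have hf' := (hUf x hx).hasFDerivAt
    have hκ' := (hUκ x hx).hasFDerivAt
    have hPd : HasFDerivAt P
        ((Prod.fst x) • (u x • fderiv ℝ f x + f x • fderiv ℝ u x)
          + (u x * f x) • ContinuousLinearMap.fst ℝ ℝ ℝ) x :=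
      hasFDerivAt_fst.mul (hu'.mul hf')
    have hQd : HasFDerivAt Q
        ((x.2 + κ x) • (u x • fderiv ℝ f x + f x • fderiv ℝ u x)
          + (u x * f x) • (ContinuousLinearMap.snd ℝ ℝ ℝ + fderiv ℝ κ x)) x :=
      (hasFDerivAt_snd.add hκ').mul (hu'.mul hf')
    rw [hPd.fderiv, hQd.fderiv]
    simp only [ContinuousLinearMap.add_apply, ContinuousLinearMap.smul_apply,
      ContinuousLinearMap.coe_fst', ContinuousLinearMap.coe_snd', smul_eq_mul]
    rw [← d1_eq_fderiv u x (hUu x hx), ← d1_eq_fderiv f x (hUf x hx),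
      ← d2_eq_fderiv u x (hUu x hx), ← d2_eq_fderiv f x (hUf x hx),
      ← d2_eq_fderiv κ x (hUκ x hx)]
    simp only [hEdef]
    ring
  -- continuity facts on U
  have hcu : ContinuousOn u U := hu.continuousOn
  have hcf : ContinuousOn f U := hf.continuousOn
  have hcκ : ContinuousOn κ U := hκ.continuousOn
  have hcE : ContinuousOn E U := by
    apply ContinuousOn.add
    apply ContinuousOn.add
    apply ContinuousOn.add
    · exact hcu.mul hcf
    · exact (continuous_fst.continuousOn).mul
        (((contOn_d1 u U hU hu).mul hcf).add (hcu.mul (contOn_d1 f U hU hf)))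
    · exact ((continuousOn_const.add (contOn_d2 κ U hU hκ))).mul (hcu.mul hcf)
    · exact ((continuous_snd.continuousOn).add hcκ).mul
        (((contOn_d2 u U hU hu).mul hcf).add (hcu.mul (contOn_d2 f U hU hf)))
  have hcP : ContinuousOn P U := (continuous_fst.continuousOn).mul (hcu.mul hcf)
  have hcQ : ContinuousOn Q U := ((continuous_snd.continuousOn).add hcκ).mul (hcu.mul hcf)
  have hXcompact : IsCompact X := hXIcc ▸ isCompact_Icc
  have hXmeas : MeasurableSet X := hXIcc ▸ measurableSet_Icc
  have hEint : IntegrableOn E X :=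
    ContinuousOn.integrableOn_compact hXcompact (hcE.mono hXU)
  have hfintg : IntegrableOn f X :=
    ContinuousOn.integrableOn_compact hXcompact (hcf.mono hXU)
  set C : ℝ×ℝ→ℝ := fun x =>
      u x * (x.1 * d1 f x + (x.2 + κ x) * d2 f x + (3 + d2 κ x) * f x) with hCdef
  have hcC : ContinuousOn C U := by
    apply hcu.mul
    apply ContinuousOn.add
    apply ContinuousOn.add
    · exact (continuous_fst.continuousOn).mul (contOn_d1 f U hU hf)
    · exact ((continuous_snd.continuousOn).add hcκ).mul (contOn_d2 f U hU hf)
    · exact (continuousOn_const.add (contOn_d2 κ U hU hκ)).mul hcf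
  have hCint : IntegrableOn C X :=
    ContinuousOn.integrableOn_compact hXcompact (hcC.mono hXU)
  -- divergence theorem
  have hle : ((a₁,a₂) : ℝ×ℝ) ≤ (b₁,b₂) := ⟨hab₁.le, hab₂.le⟩
  have hIoosub : Ioo a₁ b₁ ×ˢ Ioo a₂ b₂ ⊆ U := fun x hx => hXU
    (by rw [hXdef, rect]; exact ⟨Ioo_subset_Icc_self hx.1, Ioo_subset_Icc_self hx.2⟩)
  have Hdf : ∀ x ∈ Ioo a₁ b₁ ×ˢ Ioo a₂ b₂ \ (∅ : Set (ℝ×ℝ)),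
      HasFDerivAt P (fderiv ℝ P x) x := by
    intro x hx
    have hxU := hIoosub hx.1
    exact (differentiableAt_fst.mul ((hUu x hxU).mul (hUf x hxU))).hasFDerivAt
  have Hdg : ∀ x ∈ Ioo a₁ b₁ ×ˢ Ioo a₂ b₂ \ (∅ : Set (ℝ×ℝ)),
      HasFDerivAt Q (fderiv ℝ Q x) x := by
    intro x hx
    have hxU := hIoosub hx.1
    exact ((differentiableAt_snd.add (hUκ x hxU)).mul ((hUu x hxU).mul (hUf x hxU))).hasFDerivAt
  have Hi : IntegrableOn (fun x => fderiv ℝ P x (1,0) + fderiv ℝ Q x (0,1))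
      (Icc ((a₁,a₂) : ℝ×ℝ) (b₁,b₂)) := by
    rw [← hXIcc]
    exact hEint.congr_fun (fun x hx => (key x (hXU hx)).symm) hXmeas
  have hdivthm := integral_divergence_prod_Icc_of_hasFDerivAt_off_countable_of_le
    P Q (fderiv ℝ P) (fderiv ℝ Q) (a₁,a₂) (b₁,b₂) hle ∅ countable_empty
    (hcP.mono (hXIcc ▸ hXU)) (hcQ.mono (hXIcc ▸ hXU)) Hdf Hdg Hi
  have hED : (∫ x in X, E x)
      = (((∫ s in a₁..b₁, Q (s, b₂)) - ∫ s in a₁..b₁, Q (s, a₂))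
          + ∫ s in a₂..b₂, P (b₁, s)) - ∫ s in a₂..b₂, P (a₁, s) := by
    rw [← hdivthm, hXIcc]
    exact setIntegral_congr_fun measurableSet_Icc
      (fun x hx => (key x (hXU (hXIcc ▸ hx))).symm)
  -- boundary integrals in the statement's form
  have e1 : (∫ s in a₁..b₁, Q (s, a₂))
      = ∫ s in a₁..b₁, u (s, a₂) * (a₂ + κ (s, a₂)) * f (s, a₂) :=
    intervalIntegral.integral_congr fun s _ => by simp only [hQdef]; ring
  have e2 : (∫ s in a₁..b₁, Q (s, b₂))
      = ∫ s in a₁..b₁, u (s, b₂) * (b₂ + κ (s, b₂)) * f (s, b₂) :=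
    intervalIntegral.integral_congr fun s _ => by simp only [hQdef]; ring
  have e3 : (∫ s in a₂..b₂, P (b₁, s))
      = ∫ s in a₂..b₂, u (b₁, s) * b₁ * f (b₁, s) :=
    intervalIntegral.integral_congr fun s _ => by simp only [hPdef]; ring
  have e4 : (∫ s in a₂..b₂, P (a₁, s))
      = ∫ s in a₂..b₂, u (a₁, s) * a₁ * f (a₁, s) :=
    intervalIntegral.integral_congr fun s _ => by simp only [hPdef]; ring
  -- split the left-hand side
  have h1 : EqOn (fun x : ℝ×ℝ =>
        (x.1 * d1 u x + (x.2 + κ x) * d2 u x - (u x - u (a₁, a₂))) * f x)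
      (fun x => E x + u (a₁, a₂) * f x - C x) X := by
    intro x hx
    simp only [hEdef, hCdef]
    ring
  rw [setIntegral_congr_fun hXmeas h1]
  have h2 : (∫ x in X, (E x + u (a₁, a₂) * f x - C x))
      = (∫ x in X, E x) + u (a₁, a₂) * (∫ x in X, f x) - ∫ x in X, C x := by
    have hsum : IntegrableOn (fun x => E x + u (a₁, a₂) * f x) X := by
      exact hEint.add (hfintg.const_mul (u (a₁, a₂)))
    have hcm : IntegrableOn (fun x => u (a₁, a₂) * f x) X := by
      exact hfintg.const_mul (u (a₁, a₂))
    rw [integral_sub hsum hCint, integral_add hEint hcm, integral_const_mul]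
  rw [h2, hfint, hED, e1, e2, e3, e4]
  ring
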